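/- arXiv:2401.00584 — 3 statements merged into one kernel-verified Lean document; each statement's English description precedes it below -/
import Mathlib

section
/- Let t be a semibounded form on H, c ≤ m(t), and Q_c a representing map for t − c. Then the relation A = Q_c*Q_c** + c is selfadjoint and bounded below by m(t), and for each (φ, φ') ∈ A there exists a sequence φ_n ∈ dom t with φ_n → φ in H, t[φ_n − φ_m] → 0, and t[φ_n, ψ] → ⟨φ', ψ⟩ for all ψ ∈ dom t. Conversely, any selfadjoint relation H₀ such that each (φ,φ') ∈ H₀ admits such an approximating sequence satisfies H₀ = A. -/
open Filter Topology
open scoped ComplexOrder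

noncomputable section

variable {H K K' : Type*}

/-- Sesquilinear forms with domain `D`: linear in the first argument,
conjugate-linear in the second. -/
abbrev Form [NormedAddCommGroup H] [InnerProductSpace ℂ H] (D : Submodule ℂ H) : Type _ :=
  ↥D →ₗ[ℂ] (↥D →ₛₗ[starRingEnd ℂ] ℂ)

section Defs

variable [NormedAddCommGroup H] [InnerProductSpace ℂ H]
  [NormedAddCommGroup K] [InnerProductSpace ℂ K]
  {D : Submodule ℂ H}

/-- `t[φ,φ] ≥ c‖φ‖²` on the domain (in the complex order, so diagonal values are real). -/
def BddBelowBy (t : Form D) (c : ℝ) : Prop :=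
  ∀ φ : ↥D, (↑(c * ‖(φ : H)‖ ^ 2) : ℂ) ≤ t φ φ

/-- The set of Rayleigh quotients of the form `t`; its infimum is the lower bound `m(t)`. -/
def rayleighSet (t : Form D) : Set ℝ :=
  {r : ℝ | ∃ φ : ↥D, (φ : H) ≠ 0 ∧ r = (t φ φ).re / ‖(φ : H)‖ ^ 2}

/-- `Q` is a representing map for the form `t - c` :
`t[φ,ψ] - c(φ,ψ) = (Qφ,Qψ)` (forms/inner ℂ products linear in the first entry). -/
def IsRepMap (t : Form D) (c : ℝ) (Q : ↥D →ₗ[ℂ] K) : Prop :=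
  ∀ φ ψ : ↥D, t φ ψ - (c : ℂ) * (inner ℂ (ψ : H) (φ : H) : ℂ) = (inner ℂ (Q ψ) (Q φ) : ℂ)

/-- The graph of a partially defined operator. -/
def graphOf (Q : ↥D →ₗ[ℂ] K) : Set (H × K) :=
  Set.range fun φ : ↥D => ((φ : H), Q φ)

/-- `Q` is a closed operator. -/
def OpClosed (Q : ↥D →ₗ[ℂ] K) : Prop := IsClosed (graphOf Q)

/-- `Q` is closable: the closure of its graph is again a graph. -/
def OpClosable (Q : ↥D →ₗ[ℂ] K) : Prop :=
  ∀ k : K, ((0 : H), k) ∈ closure (graphOf Q) → k = 0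

/-- `Q` is singular: `ran Q ⊆ mul Q**`, equivalently every `(φ,0)` with `φ ∈ dom Q`
belongs to the closure of the graph. -/
def OpSingular (Q : ↥D →ₗ[ℂ] K) : Prop :=
  ∀ φ : ↥D, ((φ : H), (0 : K)) ∈ closure (graphOf Q)

/-- `φ n →_t x` : convergence in `H` together with `t[φ_n - φ_m] → 0`. -/
def TConv (t : Form D) (φ : ℕ → ↥D) (x : H) : Prop :=
  Tendsto (fun n => (φ n : H)) atTop (nhds x) ∧
    Tendsto (fun p : ℕ × ℕ => t (φ p.1 - φ p.2) (φ p.1 - φ p.2)) (atTop ×ˢ atTop) (nhds 0)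

/-- The form `t` is closable. -/
def FormClosable (t : Form D) : Prop :=
  ∀ φ : ℕ → ↥D, TConv t φ 0 → Tendsto (fun n => t (φ n) (φ n)) atTop (nhds 0)

/-- The form `t` is closed. -/
def FormClosed (t : Form D) : Prop :=
  ∀ (φ : ℕ → ↥D) (x : H), TConv t φ x →
    ∃ hx : x ∈ D, Tendsto (fun n => t (φ n - ⟨x, hx⟩) (φ n - ⟨x, hx⟩)) atTop (nhds 0)

/-- The (nonnegative) form `t` is singular. -/
def FormSingular (t : Form D) : Prop :=
  ∀ ψ : ↥D, ∃ φ : ℕ → ↥D,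
    Tendsto (fun n => (φ n : H)) atTop (nhds (ψ : H)) ∧
      Tendsto (fun n => t (φ n) (φ n)) atTop (nhds 0)

end Defs

section Defs2

variable [NormedAddCommGroup H] [InnerProductSpace ℂ H]

/-- Order on forms: `t₁ ≤ t₂` iff `dom t₂ ⊆ dom t₁` and `t₁[φ] ≤ t₂[φ]` on `dom t₂`. -/
def FormLE {D₁ D₂ : Submodule ℂ H} (t₁ : Form D₁) (t₂ : Form D₂) : Prop :=
  ∃ h : D₂ ≤ D₁, ∀ φ : ↥D₂, t₁ ⟨(φ : H), h φ.2⟩ ⟨(φ : H), h φ.2⟩ ≤ t₂ φ φ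

/-- `s` is an extension of the form `t` (`t ⊂ s`). -/
def FormExtends {D₁ D₂ : Submodule ℂ H} (s : Form D₂) (t : Form D₁) : Prop :=
  ∃ h : D₁ ≤ D₂, ∀ φ ψ : ↥D₁, s ⟨(φ : H), h φ.2⟩ ⟨(ψ : H), h ψ.2⟩ = t φ ψ

/-- `r` is the regular part of `s` : a closable semibounded form below `s`
which dominates every closable semibounded form below `s`. -/
def IsRegularPart {D : Submodule ℂ H} (s r : Form D) : Prop :=
  FormClosable r ∧ (∃ c, BddBelowBy r c) ∧ FormLE r s ∧
    ∀ (Du : Submodule ℂ H) (u : Form Du), FormClosable u → (∃ cu, BddBelowBy u cu) →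
      FormLE u s → FormLE u r

end Defs2

section Rel

variable [NormedAddCommGroup H] [InnerProductSpace ℂ H]
  [NormedAddCommGroup K] [InnerProductSpace ℂ K] {D : Submodule ℂ H}

/-- A symmetric relation in `H`: `⟨φ',ψ⟩ = ⟨φ,ψ'⟩` for all members. -/
def IsSymmRel (R : Set (H × H)) : Prop :=
  ∀ p ∈ R, ∀ q ∈ R, (inner ℂ q.1 p.2 : ℂ) = (inner ℂ q.2 p.1 : ℂ)

/-- The adjoint of a linear relation in `H`. -/
def adjRelSet (R : Set (H × H)) : Set (H × H) :=
  {q | ∀ p ∈ R, (inner ℂ q.1 p.2 : ℂ) = (inner ℂ q.2 p.1 : ℂ)}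

/-- The relation `Q*Q + c` in `H`. -/
def StRel (Q : ↥D →ₗ[ℂ] K) (c : ℝ) : Set (H × H) :=
  {p | ∃ h : p.1 ∈ D, ∀ ψ : ↥D,
    (inner ℂ (Q ψ) (Q ⟨p.1, h⟩) : ℂ) = (inner ℂ (ψ : H) (p.2 - (c : ℂ) • p.1) : ℂ)}

/-- The relation `Q*Q** + c` in `H`, where `Q**` is the closure of the graph of `Q`. -/
def ARel (Q : ↥D →ₗ[ℂ] K) (c : ℝ) : Set (H × H) :=
  {p | ∃ g : K, (p.1, g) ∈ closure (graphOf Q) ∧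
    ∀ ψ : ↥D, (inner ℂ (Q ψ) g : ℂ) = (inner ℂ (ψ : H) (p.2 - (c : ℂ) • p.1) : ℂ)}

end Rel


section AuxProofs

variable [NormedAddCommGroup H] [InnerProductSpace ℂ H] [CompleteSpace H]
  [NormedAddCommGroup K] [InnerProductSpace ℂ K] [CompleteSpace K]
  {D : Submodule ℂ H}

/-- The defining relation of the adjoint extends from the graph to its closure. -/
lemma aux_ext (Q : ↥D →ₗ[ℂ] K) {x : H} {k : K} (hx : (x, k) ∈ closure (graphOf Q))
    (g : K) (h : H) (hg : ∀ ψ : ↥D, (inner ℂ (Q ψ) g : ℂ) = (inner ℂ (ψ : H) h : ℂ)) :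
    (inner ℂ k g : ℂ) = (inner ℂ x h : ℂ) := by
  have hcl : IsClosed {p : H × K | (inner ℂ p.2 g : ℂ) = (inner ℂ p.1 h : ℂ)} :=
    isClosed_eq (continuous_snd.inner continuous_const)
      (continuous_fst.inner continuous_const)
  have hsub : graphOf Q ⊆ {p : H × K | (inner ℂ p.2 g : ℂ) = (inner ℂ p.1 h : ℂ)} := by
    rintro p ⟨ψ, rfl⟩
    exact hg ψ
  exact closure_minimal hsub hcl hx

/-- The relation `A = Q*Q** + c` is symmetric. -/
lemma aux_symm (Q : ↥D →ₗ[ℂ] K) (c : ℝ) : IsSymmRel (ARel Q c) := by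
  rintro ⟨φ₁, φ₁'⟩ ⟨g₁, hg₁c, hg₁⟩ ⟨φ₂, φ₂'⟩ ⟨g₂, hg₂c, hg₂⟩
  simp only at hg₁ hg₂ ⊢
  have e1 : (inner ℂ g₂ g₁ : ℂ) = inner ℂ φ₂ (φ₁' - (c : ℂ) • φ₁) := aux_ext Q hg₂c g₁ _ hg₁
  have e2 : (inner ℂ g₁ g₂ : ℂ) = inner ℂ φ₁ (φ₂' - (c : ℂ) • φ₂) := aux_ext Q hg₁c g₂ _ hg₂
  have h1 : (inner ℂ φ₂ φ₁' : ℂ) = inner ℂ g₂ g₁ + (c : ℂ) * inner ℂ φ₂ φ₁ := by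
    rw [e1, inner_sub_right, inner_smul_right]; ring
  have h2 : (inner ℂ φ₁ φ₂' : ℂ) = inner ℂ g₁ g₂ + (c : ℂ) * inner ℂ φ₁ φ₂ := by
    rw [e2, inner_sub_right, inner_smul_right]; ring
  calc (inner ℂ φ₂ φ₁' : ℂ) = inner ℂ g₂ g₁ + (c : ℂ) * inner ℂ φ₂ φ₁ := h1
    _ = starRingEnd ℂ (inner ℂ g₁ g₂ + (c : ℂ) * inner ℂ φ₁ φ₂) := by
        rw [map_add, map_mul, inner_conj_symm, inner_conj_symm, Complex.conj_ofReal]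
    _ = starRingEnd ℂ (inner ℂ φ₁ φ₂') := by rw [h2]
    _ = inner ℂ φ₂' φ₁ := inner_conj_symm _ _

/-- Surjectivity: every `u` decomposes through the closure of the graph of `Q`. -/
lemma aux_surj (Q : ↥D →ₗ[ℂ] K) (u : H) :
    ∃ (φ : H) (g : K), (φ, g) ∈ closure (graphOf Q) ∧
      ∀ ψ : ↥D, (inner ℂ (Q ψ) g : ℂ) = (inner ℂ (ψ : H) (u - φ) : ℂ) := by
  classical
  set e := WithLp.prodContinuousLinearEquiv 2 ℂ H K with he
  let L : ↥D →ₗ[ℂ] H × K := D.subtype.prod Q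
  have hLgraph : graphOf Q = Set.range L := rfl
  let GE : Submodule ℂ (WithLp 2 (H × K)) :=
    (LinearMap.range L).comap (e.toLinearEquiv : WithLp 2 (H × K) →ₗ[ℂ] H × K)
  have hGE : (GE : Set (WithLp 2 (H × K))) = ⇑e ⁻¹' (graphOf Q) := rfl
  let GEc := GE.topologicalClosure
  have hGEc : (GEc : Set (WithLp 2 (H × K))) = ⇑e ⁻¹' (closure (graphOf Q)) := by
    rw [Submodule.topologicalClosure_coe, hGE]
    exact (e.toHomeomorph.preimage_closure _).symm
  haveI : CompleteSpace GEc := GE.isClosed_topologicalClosure.completeSpace_coe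
  obtain ⟨y, hy, z, hz, hv⟩ := GEc.exists_add_mem_mem_orthogonal (e.symm (u, 0))
  refine ⟨y.fst, y.snd, ?_, ?_⟩
  · have : y ∈ (GEc : Set (WithLp 2 (H × K))) := hy
    rw [hGEc] at this
    exact this
  · intro ψ
    have hx : e.symm ((ψ : H), Q ψ) ∈ GEc := by
      apply GE.le_topologicalClosure
      show e (e.symm _) ∈ LinearMap.range L
      rw [e.apply_symm_apply]
      exact ⟨ψ, rfl⟩
    have h0 : (inner ℂ (e.symm ((ψ : H), Q ψ)) z : ℂ) = 0 :=
      (Submodule.mem_orthogonal _ _).1 hz _ hx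
    rw [WithLp.prod_inner_apply] at h0
    have hz1 : z.ofLp.1 = u - y.fst := by
      have h1 : y.fst + z.fst = u := (congrArg WithLp.fst hv).symm
      exact eq_sub_of_add_eq' h1
    have hz2 : z.ofLp.2 = -y.snd := by
      have h2 : y.snd + z.snd = 0 := (congrArg WithLp.snd hv).symm
      exact eq_neg_of_add_eq_zero_right h2
    have e1 : ((e.symm ((ψ : H), Q ψ) : WithLp 2 (H × K)).ofLp.1) = (ψ : H) := rfl
    have e2 : ((e.symm ((ψ : H), Q ψ) : WithLp 2 (H × K)).ofLp.2) = Q ψ := rfl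
    rw [e1, e2, hz1, hz2, inner_neg_right] at h0
    linear_combination -h0

/-- The diagonal value of a represented form. -/
lemma aux_diag (t : Form D) (c : ℝ) (Q : ↥D →ₗ[ℂ] K) (hQ : IsRepMap t c Q) (χ : ↥D) :
    t χ χ = ((‖Q χ‖ ^ 2 + c * ‖(χ : H)‖ ^ 2 : ℝ) : ℂ) := by
  have h := hQ χ χ
  have h1 : (inner ℂ (Q χ) (Q χ) : ℂ) = ((‖Q χ‖ ^ 2 : ℝ) : ℂ) := by
    rw [inner_self_eq_norm_sq_to_K]; norm_cast
  have h2 : (inner ℂ (χ : H) (χ : H) : ℂ) = ((‖(χ : H)‖ ^ 2 : ℝ) : ℂ) := by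
    rw [inner_self_eq_norm_sq_to_K]; norm_cast
  rw [h1, h2] at h
  push_cast at h ⊢
  linear_combination h

/-- The lower bound on the closure of the graph of `Q`. -/
lemma aux_lb (t : Form D) (m c : ℝ) (hm : IsGLB (rayleighSet t) m)
    (Q : ↥D →ₗ[ℂ] K) (hQ : IsRepMap t c Q) {x : H} {k : K}
    (hx : (x, k) ∈ closure (graphOf Q)) : (m - c) * ‖x‖ ^ 2 ≤ ‖k‖ ^ 2 := by
  have hcl : IsClosed {p : H × K | (m - c) * ‖p.1‖ ^ 2 ≤ ‖p.2‖ ^ 2} := by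
    apply isClosed_le
    · exact (continuous_const.mul ((continuous_norm.comp continuous_fst).pow 2))
    · exact ((continuous_norm.comp continuous_snd).pow 2)
  have hsub : graphOf Q ⊆ {p : H × K | (m - c) * ‖p.1‖ ^ 2 ≤ ‖p.2‖ ^ 2} := by
    rintro p ⟨ψ, rfl⟩
    simp only [Set.mem_setOf_eq]
    by_cases hψ : (ψ : H) = 0
    · have : Q ψ = 0 := by
        have hz : ψ = 0 := Subtype.ext hψ
        rw [hz, map_zero]
      rw [hψ, this]
      simp
    · have hray : m ≤ (t ψ ψ).re / ‖(ψ : H)‖ ^ 2 := hm.1 ⟨ψ, hψ, rfl⟩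
      have hpos : (0 : ℝ) < ‖(ψ : H)‖ ^ 2 := pow_pos (norm_pos_iff.2 hψ) 2
      have hge : m * ‖(ψ : H)‖ ^ 2 ≤ (t ψ ψ).re := by
        rw [le_div_iff₀ hpos] at hray
        linarith
      have hdiag := aux_diag t c Q hQ ψ
      have hre : (t ψ ψ).re = ‖Q ψ‖ ^ 2 + c * ‖(ψ : H)‖ ^ 2 := by
        rw [hdiag, Complex.ofReal_re]
      rw [hre] at hge
      linarith
  exact closure_minimal hsub hcl hx

/-- Every element of `A` has an approximating sequence. -/
lemma aux_approx (t : Form D) (c : ℝ) (Q : ↥D →ₗ[ℂ] K) (hQ : IsRepMap t c Q)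
    {p : H × H} (hp : p ∈ ARel Q c) :
    ∃ φn : ℕ → ↥D,
      Tendsto (fun n => (φn n : H)) atTop (nhds p.1) ∧
      Tendsto (fun q : ℕ × ℕ => t (φn q.1 - φn q.2) (φn q.1 - φn q.2))
        (atTop ×ˢ atTop) (nhds 0) ∧
      ∀ ψ : ↥D, Tendsto (fun n => t (φn n) ψ) atTop (nhds (inner ℂ (ψ : H) p.2 : ℂ)) := by
  obtain ⟨g, hgc, hg⟩ := hp
  obtain ⟨x, hxs, hxl⟩ := mem_closure_iff_seq_limit.1 hgc
  choose φn hφn using hxs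
  have hfst : Tendsto (fun n => (φn n : H)) atTop (nhds p.1) := by
    have := (continuous_fst.tendsto (p.1, g)).comp hxl
    refine this.congr fun n => ?_
    simp only [Function.comp_apply]
    rw [← hφn n]
  have hsnd : Tendsto (fun n => Q (φn n)) atTop (nhds g) := by
    have := (continuous_snd.tendsto (p.1, g)).comp hxl
    refine this.congr fun n => ?_
    simp only [Function.comp_apply]
    rw [← hφn n]
  refine ⟨φn, hfst, ?_, ?_⟩
  · have hQd : Tendsto (fun q : ℕ × ℕ => Q (φn q.1 - φn q.2)) (atTop ×ˢ atTop)
        (nhds 0) := by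
      have := (hsnd.comp tendsto_fst).sub (hsnd.comp tendsto_snd)
      simpa [map_sub] using this
    have hHd : Tendsto (fun q : ℕ × ℕ => ((φn q.1 - φn q.2 : ↥D) : H)) (atTop ×ˢ atTop)
        (nhds 0) := by
      have := (hfst.comp tendsto_fst).sub (hfst.comp tendsto_snd)
      simpa using this
    have hinner1 : Tendsto (fun q : ℕ × ℕ =>
        (inner ℂ (Q (φn q.1 - φn q.2)) (Q (φn q.1 - φn q.2)) : ℂ))
        (atTop ×ˢ atTop) (nhds 0) := by
      have := hQd.inner (𝕜 := ℂ) hQd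
      simpa using this
    have hinner2 : Tendsto (fun q : ℕ × ℕ =>
        (inner ℂ ((φn q.1 - φn q.2 : ↥D) : H) ((φn q.1 - φn q.2 : ↥D) : H) : ℂ))
        (atTop ×ˢ atTop) (nhds 0) := by
      have := hHd.inner (𝕜 := ℂ) hHd
      simpa using this
    have hsum : Tendsto (fun q : ℕ × ℕ =>
        (inner ℂ (Q (φn q.1 - φn q.2)) (Q (φn q.1 - φn q.2)) : ℂ)
          + (c : ℂ) * inner ℂ ((φn q.1 - φn q.2 : ↥D) : H) ((φn q.1 - φn q.2 : ↥D) : H))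
        (atTop ×ˢ atTop) (nhds 0) := by
      have := hinner1.add (hinner2.const_mul (c : ℂ))
      simpa using this
    refine hsum.congr fun q => ?_
    have h := hQ (φn q.1 - φn q.2) (φn q.1 - φn q.2)
    linear_combination -h
  · intro ψ
    have h1 : Tendsto (fun n => (inner ℂ (Q ψ) (Q (φn n)) : ℂ)) atTop
        (nhds (inner ℂ (Q ψ) g : ℂ)) := tendsto_const_nhds.inner hsnd
    have h2 : Tendsto (fun n => (inner ℂ (ψ : H) ((φn n : H)) : ℂ)) atTop
        (nhds (inner ℂ (ψ : H) p.1 : ℂ)) := tendsto_const_nhds.inner hfst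
    have h3 : Tendsto (fun n => (inner ℂ (Q ψ) (Q (φn n)) : ℂ)
        + (c : ℂ) * inner ℂ (ψ : H) ((φn n : H))) atTop
        (nhds ((inner ℂ (Q ψ) g : ℂ) + (c : ℂ) * inner ℂ (ψ : H) p.1)) :=
      h1.add (h2.const_mul (c : ℂ))
    have hval : (inner ℂ (Q ψ) g : ℂ) + (c : ℂ) * inner ℂ (ψ : H) p.1 = inner ℂ (ψ : H) p.2 := by
      rw [hg ψ, inner_sub_right, inner_smul_right]
      ring
    rw [hval] at h3
    refine h3.congr fun n => ?_
    have h := hQ (φn n) ψ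
    linear_combination -h

/-- Any pair admitting an approximating sequence belongs to `A`. -/
lemma aux_conv (t : Form D) (c : ℝ) (Q : ↥D →ₗ[ℂ] K) (hQ : IsRepMap t c Q)
    {p : H × H} (φn : ℕ → ↥D)
    (h1 : Tendsto (fun n => (φn n : H)) atTop (nhds p.1))
    (h2 : Tendsto (fun q : ℕ × ℕ => t (φn q.1 - φn q.2) (φn q.1 - φn q.2))
      (atTop ×ˢ atTop) (nhds 0))
    (h3 : ∀ ψ : ↥D, Tendsto (fun n => t (φn n) ψ) atTop (nhds (inner ℂ (ψ : H) p.2 : ℂ))) :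
    p ∈ ARel Q c := by
  have hHd : Tendsto (fun q : ℕ × ℕ => (φn q.1 : H) - (φn q.2 : H)) (atTop ×ˢ atTop)
      (nhds 0) := by
    have := (h1.comp tendsto_fst).sub (h1.comp tendsto_snd)
    simpa using this
  have hn2 : Tendsto (fun q : ℕ × ℕ => ‖(φn q.1 : H) - (φn q.2 : H)‖ ^ 2)
      (atTop ×ˢ atTop) (nhds 0) := by
    have := (hHd.norm).pow 2
    simpa using this
  have hre : Tendsto (fun q : ℕ × ℕ => (t (φn q.1 - φn q.2) (φn q.1 - φn q.2)).re)
      (atTop ×ˢ atTop) (nhds 0) := by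
    have := (Complex.continuous_re.tendsto 0).comp h2
    simpa [Function.comp_def] using this
  have hQsq : Tendsto (fun q : ℕ × ℕ => ‖Q (φn q.1 - φn q.2)‖ ^ 2)
      (atTop ×ˢ atTop) (nhds 0) := by
    have heq : ∀ q : ℕ × ℕ, ‖Q (φn q.1 - φn q.2)‖ ^ 2
        = (t (φn q.1 - φn q.2) (φn q.1 - φn q.2)).re
          - c * ‖(φn q.1 : H) - (φn q.2 : H)‖ ^ 2 := by
      intro q
      have hd := aux_diag t c Q hQ (φn q.1 - φn q.2)
      have hr := congrArg Complex.re hd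
      rw [Complex.ofReal_re] at hr
      have hcoe : ((φn q.1 - φn q.2 : ↥D) : H) = (φn q.1 : H) - (φn q.2 : H) := rfl
      rw [hcoe] at hr
      linarith [hr]
    have := hre.sub (hn2.const_mul c)
    rw [show (0 : ℝ) - c * 0 = 0 by ring] at this
    exact this.congr fun q => (heq q).symm
  have hcau : CauchySeq (fun n => Q (φn n)) := by
    rw [cauchySeq_iff_tendsto_dist_atTop_0, ← prod_atTop_atTop_eq]
    have := (Real.continuous_sqrt.tendsto 0).comp hQsq
    rw [Real.sqrt_zero] at this
    refine this.congr fun q => ?_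
    simp only [Function.comp_apply]
    rw [Real.sqrt_sq (norm_nonneg _), map_sub, dist_eq_norm]
  obtain ⟨g, hgl⟩ := cauchySeq_tendsto_of_complete hcau
  refine ⟨g, ?_, ?_⟩
  · apply mem_closure_of_tendsto (h1.prodMk_nhds hgl)
    exact Filter.Eventually.of_forall fun n => ⟨φn n, rfl⟩
  · intro ψ
    have la : Tendsto (fun n => (inner ℂ (Q ψ) (Q (φn n)) : ℂ)) atTop
        (nhds (inner ℂ (Q ψ) g : ℂ)) := tendsto_const_nhds.inner hgl
    have lb' : Tendsto (fun n => (inner ℂ (Q ψ) (Q (φn n)) : ℂ)) atTop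
        (nhds ((inner ℂ (ψ : H) p.2 : ℂ) - (c : ℂ) * inner ℂ (ψ : H) p.1)) := by
      have hb : Tendsto (fun n => t (φn n) ψ - (c : ℂ) * inner ℂ (ψ : H) ((φn n : H)))
          atTop (nhds ((inner ℂ (ψ : H) p.2 : ℂ) - (c : ℂ) * inner ℂ (ψ : H) p.1)) :=
        (h3 ψ).sub ((tendsto_const_nhds.inner h1).const_mul (c : ℂ))
      refine hb.congr fun n => ?_
      have h := hQ (φn n) ψ
      linear_combination h
    have := tendsto_nhds_unique la lb'
    rw [this, inner_sub_right, inner_smul_right]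

end AuxProofs

/-- the relation `A = Q*Q** + c` is selfadjoint, bounded below by `m(t)`,
every element of `A` is represented by `t` in the limit sense, and `A` is the unique
selfadjoint relation with this property. -/
theorem statement17 [NormedAddCommGroup H] [InnerProductSpace ℂ H] [CompleteSpace H]
    [NormedAddCommGroup K] [InnerProductSpace ℂ K] [CompleteSpace K]
    {D : Submodule ℂ H} (t : Form D) (m c : ℝ)
    (hm : IsGLB (rayleighSet t) m) (hc : c ≤ m)
    (Q : ↥D →ₗ[ℂ] K) (hQ : IsRepMap t c Q) :
    ARel Q c = adjRelSet (ARel Q c) ∧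
      (∀ p ∈ ARel Q c, (↑(m * ‖p.1‖ ^ 2) : ℂ) ≤ (inner ℂ p.1 p.2 : ℂ)) ∧
      (∀ p ∈ ARel Q c, ∃ φn : ℕ → ↥D,
        Tendsto (fun n => (φn n : H)) atTop (nhds p.1) ∧
        Tendsto (fun q : ℕ × ℕ => t (φn q.1 - φn q.2) (φn q.1 - φn q.2))
          (atTop ×ˢ atTop) (nhds 0) ∧
        ∀ ψ : ↥D, Tendsto (fun n => t (φn n) ψ) atTop
          (nhds (inner ℂ (ψ : H) p.2 : ℂ))) ∧
      (∀ R : Set (H × H), R = adjRelSet R →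
        (∀ p ∈ R, ∃ φn : ℕ → ↥D,
          Tendsto (fun n => (φn n : H)) atTop (nhds p.1) ∧
          Tendsto (fun q : ℕ × ℕ => t (φn q.1 - φn q.2) (φn q.1 - φn q.2))
            (atTop ×ˢ atTop) (nhds 0) ∧
          ∀ ψ : ↥D, Tendsto (fun n => t (φn n) ψ) atTop
            (nhds (inner ℂ (ψ : H) p.2 : ℂ))) →
        R = ARel Q c) := by
  classical
  -- value of ⟨φ, φ'⟩ for members of A
  have hval : ∀ p ∈ ARel Q c, ∃ g : K, (p.1, g) ∈ closure (graphOf Q) ∧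
      (inner ℂ p.1 p.2 : ℂ) = ((‖g‖ ^ 2 + c * ‖p.1‖ ^ 2 : ℝ) : ℂ) := by
    rintro ⟨φ, φ'⟩ ⟨g, hgc, hg⟩
    refine ⟨g, hgc, ?_⟩
    have e0 : (inner ℂ g g : ℂ) = inner ℂ φ (φ' - (c : ℂ) • φ) := aux_ext Q hgc g _ hg
    have e1 : (inner ℂ g g : ℂ) = ((‖g‖ ^ 2 : ℝ) : ℂ) := by
      rw [inner_self_eq_norm_sq_to_K]; norm_cast
    have e2 : (inner ℂ φ φ : ℂ) = ((‖φ‖ ^ 2 : ℝ) : ℂ) := by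
      rw [inner_self_eq_norm_sq_to_K]; norm_cast
    rw [inner_sub_right, inner_smul_right, e1, e2] at e0
    push_cast at e0 ⊢
    linear_combination -e0
  -- the self-adjointness
  have hself : ARel Q c = adjRelSet (ARel Q c) := by
    apply Set.Subset.antisymm
    · intro p hp r hr
      exact aux_symm Q c r hr p hp
    · -- decomposition lemma
      have hdec : ∀ w : H, ∃ a a' : H, (a, a') ∈ ARel Q c ∧ a' + ((1 : ℂ) - c) • a = w := by
        intro w
        obtain ⟨φ, g, hmem, hQg⟩ := aux_surj Q w
        refine ⟨φ, w - ((1 : ℂ) - c) • φ, ⟨g, hmem, ?_⟩, by abel⟩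
        intro ψ
        have : w - ((1 : ℂ) - c) • φ - (c : ℂ) • φ = w - φ := by
          rw [sub_sub, ← add_smul]
          norm_num
        simp only
        rw [this]
        exact hQg ψ
      rintro ⟨u, v⟩ hp
      set w := v + ((1 : ℂ) - c) • u with hw
      obtain ⟨a, a', haA, haw⟩ := hdec w
      have hconj : starRingEnd ℂ ((1 : ℂ) - c) = (1 : ℂ) - c := by
        rw [map_sub, map_one, Complex.conj_ofReal]
      have hua : u = a := by
        have hz : ∀ z : H, (inner ℂ (u - a) z : ℂ) = 0 := by
          intro z
          obtain ⟨b, b', hbA, hbz⟩ := hdec z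
          have h1 : (inner ℂ u z : ℂ) = inner ℂ w b := by
            rw [← hbz, inner_add_right, inner_smul_right, hp _ hbA, hw,
              inner_add_left, inner_smul_left, hconj]
          have h2 : (inner ℂ a z : ℂ) = inner ℂ w b := by
            rw [← hbz, inner_add_right, inner_smul_right,
              aux_symm Q c _ hbA _ haA, ← haw, inner_add_left, inner_smul_left, hconj]
          rw [inner_sub_left, h1, h2, sub_self]
        have := hz (u - a)
        rwa [inner_self_eq_zero, sub_eq_zero] at this
      have hva : v = a' := by
        have : a' + ((1 : ℂ) - c) • a = v + ((1 : ℂ) - c) • u := haw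
        rw [hua] at this
        have := add_right_cancel this
        exact this.symm
      rw [show ((u, v) : H × H) = (a, a') by rw [hua, hva]]
      exact haA
  refine ⟨hself, ?_, ?_, ?_⟩
  · -- lower bound
    rintro p hp
    obtain ⟨g, hgc, hinner⟩ := hval p hp
    have hlb : (m - c) * ‖p.1‖ ^ 2 ≤ ‖g‖ ^ 2 := aux_lb t m c hm Q hQ hgc
    rw [hinner]
    rw [Complex.real_le_real]
    nlinarith [sq_nonneg ‖p.1‖]
  · -- the approximating sequence
    intro p hp
    exact aux_approx t c Q hQ hp
  · -- uniqueness
    intro R hR hRap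
    have hsub : R ⊆ ARel Q c := by
      intro p hp
      obtain ⟨φn, h1, h2, h3⟩ := hRap p hp
      exact aux_conv t c Q hQ φn h1 h2 h3
    have hsub2 : ARel Q c ⊆ R := by
      have hanti : adjRelSet (ARel Q c) ⊆ adjRelSet R := by
        intro q hq r hr
        exact hq r (hsub hr)
      rw [hself, hR]
      exact hanti
    exact Set.Subset.antisymm hsub hsub2
end
end

section
/- Let t be a semibounded form and let Q_c, Q_{c'} be representing maps for t − c and t − c' with c, c' ≤ m(t). Then Q_c*Q_c + c = Q_{c'}*Q_{c'} + c' and Q_c*Q_c** + c = Q_{c'}*(Q_{c'})** + c' as linear relations in H; i.e., the relations S_t and Ã_t are independent of the choice of the constant c and of the representing map. -/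
open Filter Topology
open scoped ComplexOrder

noncomputable section

variable {H K K' : Type*}

section AuxProof

variable [NormedAddCommGroup H] [InnerProductSpace ℂ H]
  [NormedAddCommGroup K] [InnerProductSpace ℂ K]
  [NormedAddCommGroup K'] [InnerProductSpace ℂ K']
  {D : Submodule ℂ H}

lemma aux_inner (t : Form D) (c c' : ℝ) {Q : ↥D →ₗ[ℂ] K} {Q' : ↥D →ₗ[ℂ] K'}
    (hQ : IsRepMap t c Q) (hQ' : IsRepMap t c' Q') (φ ψ : ↥D) :
    (inner ℂ (Q' ψ) (Q' φ) : ℂ) =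
      (inner ℂ (Q ψ) (Q φ) : ℂ) + ((c : ℂ) - c') * (inner ℂ (ψ : H) (φ : H) : ℂ) := by
  have h1 := hQ φ ψ; have h2 := hQ' φ ψ
  linear_combination h1 - h2

lemma aux_norm (t : Form D) (c c' : ℝ) {Q : ↥D →ₗ[ℂ] K} {Q' : ↥D →ₗ[ℂ] K'}
    (hQ : IsRepMap t c Q) (hQ' : IsRepMap t c' Q') (φ : ↥D) :
    ‖Q' φ‖ ^ 2 = ‖Q φ‖ ^ 2 + (c - c') * ‖(φ : H)‖ ^ 2 := by
  have h := congrArg (RCLike.re (K := ℂ)) (aux_inner t c c' hQ hQ' φ φ)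
  rw [map_add] at h
  rw [inner_self_eq_norm_sq, inner_self_eq_norm_sq] at h
  rw [h]
  congr 1
  have him : RCLike.im (K := ℂ) (inner ℂ (φ : H) (φ : H) : ℂ) = 0 := inner_self_im _
  have hre : RCLike.re (K := ℂ) (inner ℂ (φ : H) (φ : H) : ℂ) = ‖(φ : H)‖ ^ 2 :=
    inner_self_eq_norm_sq _
  simp [RCLike.mul_re, him, hre, ← Complex.ofReal_pow]

lemma aux_closure [CompleteSpace K'] (t : Form D) (c c' : ℝ)
    {Q : ↥D →ₗ[ℂ] K} {Q' : ↥D →ₗ[ℂ] K'}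
    (hQ : IsRepMap t c Q) (hQ' : IsRepMap t c' Q') {x : H} {g : K}
    (hxg : (x, g) ∈ closure (graphOf Q)) :
    ∃ g' : K', (x, g') ∈ closure (graphOf Q') ∧
      ∀ ψ : ↥D, (inner ℂ (Q' ψ) g' : ℂ) =
        (inner ℂ (Q ψ) g : ℂ) + ((c : ℂ) - c') * (inner ℂ (ψ : H) x : ℂ) := by
  obtain ⟨u, hu, hul⟩ := mem_closure_iff_seq_limit.mp hxg
  choose φ hφ using hu
  have hx : Tendsto (fun n => ((φ n : H))) atTop (nhds x) := by
    have h := (continuous_fst.tendsto _).comp hul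
    exact h.congr fun n => by rw [Function.comp_apply, ← hφ n]
  have hg : Tendsto (fun n => Q (φ n)) atTop (nhds g) := by
    have h := (continuous_snd.tendsto _).comp hul
    exact h.congr fun n => by rw [Function.comp_apply, ← hφ n]
  have hd1 : Tendsto (fun p : ℕ × ℕ => dist ((φ p.1 : H)) ((φ p.2 : H)))
      (atTop : Filter (ℕ × ℕ)) (nhds 0) :=
    cauchySeq_iff_tendsto_dist_atTop_0.mp hx.cauchySeq
  have hd2 : Tendsto (fun p : ℕ × ℕ => dist (Q (φ p.1)) (Q (φ p.2)))
      (atTop : Filter (ℕ × ℕ)) (nhds 0) :=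
    cauchySeq_iff_tendsto_dist_atTop_0.mp hg.cauchySeq
  have hC : CauchySeq (fun n => Q' (φ n)) := by
    rw [cauchySeq_iff_tendsto_dist_atTop_0]
    have key : ∀ p : ℕ × ℕ, dist (Q' (φ p.1)) (Q' (φ p.2)) =
        Real.sqrt ((dist (Q (φ p.1)) (Q (φ p.2))) ^ 2 +
          (c - c') * (dist ((φ p.1 : H)) ((φ p.2 : H))) ^ 2) := by
      intro p
      have h := aux_norm t c c' hQ hQ' (φ p.1 - φ p.2)
      have hdist : dist (Q' (φ p.1)) (Q' (φ p.2)) = ‖Q' (φ p.1 - φ p.2)‖ := by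
        rw [dist_eq_norm, ← map_sub]
      rw [hdist, ← Real.sqrt_sq (norm_nonneg (Q' (φ p.1 - φ p.2))), h]
      congr 1
      rw [dist_eq_norm, ← map_sub, dist_eq_norm]
      norm_num
    simp only [key]
    have h0 : Tendsto (fun p : ℕ × ℕ => (dist (Q (φ p.1)) (Q (φ p.2))) ^ 2 +
        (c - c') * (dist ((φ p.1 : H)) ((φ p.2 : H))) ^ 2) (atTop : Filter (ℕ × ℕ)) (nhds 0) := by
      have := (hd2.pow 2).add (((hd1.pow 2)).const_mul (c - c'))
      simpa using this
    have := h0.sqrt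
    simpa using this
  obtain ⟨g', hg'⟩ := cauchySeq_tendsto_of_complete hC
  refine ⟨g', ?_, ?_⟩
  · refine mem_closure_of_tendsto (hx.prodMk_nhds hg') ?_
    exact Filter.Eventually.of_forall fun n => ⟨φ n, rfl⟩
  · intro ψ
    have l1 : Tendsto (fun n => (inner ℂ (Q' ψ) (Q' (φ n)) : ℂ)) atTop
        (nhds (inner ℂ (Q' ψ) g' : ℂ)) := Tendsto.inner tendsto_const_nhds hg'
    have l2 : Tendsto (fun n => (inner ℂ (Q' ψ) (Q' (φ n)) : ℂ)) atTop
        (nhds ((inner ℂ (Q ψ) g : ℂ) + ((c : ℂ) - c') * (inner ℂ (ψ : H) x : ℂ))) := by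
      have e : (fun n => (inner ℂ (Q' ψ) (Q' (φ n)) : ℂ)) = fun n =>
          (inner ℂ (Q ψ) (Q (φ n)) : ℂ) + ((c : ℂ) - c') * (inner ℂ (ψ : H) ((φ n : H)) : ℂ) := by
        funext n; exact aux_inner t c c' hQ hQ' (φ n) ψ
      rw [e]
      exact ((Tendsto.inner tendsto_const_nhds hg).add
        ((Tendsto.inner tendsto_const_nhds hx).const_mul _))
    exact tendsto_nhds_unique l1 l2

lemma aux_st_subset (t : Form D) (c c' : ℝ) {Q : ↥D →ₗ[ℂ] K} {Q' : ↥D →ₗ[ℂ] K'}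
    (hQ : IsRepMap t c Q) (hQ' : IsRepMap t c' Q') :
    StRel Q c ⊆ StRel Q' c' := by
  rintro p ⟨h, hp⟩
  refine ⟨h, fun ψ => ?_⟩
  rw [aux_inner t c c' hQ hQ' ⟨p.1, h⟩ ψ, hp ψ]
  simp only [inner_sub_right, inner_smul_right]
  push_cast
  ring

lemma aux_a_subset [CompleteSpace K'] (t : Form D) (c c' : ℝ)
    {Q : ↥D →ₗ[ℂ] K} {Q' : ↥D →ₗ[ℂ] K'}
    (hQ : IsRepMap t c Q) (hQ' : IsRepMap t c' Q') :
    ARel Q c ⊆ ARel Q' c' := by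
  rintro p ⟨g, hg, hp⟩
  obtain ⟨g', hg', hinner⟩ := aux_closure t c c' hQ hQ' hg
  refine ⟨g', hg', fun ψ => ?_⟩
  rw [hinner ψ, hp ψ]
  simp only [inner_sub_right, inner_smul_right]
  push_cast
  ring

end AuxProof

/-- the relations `S_t = Q_c*Q_c + c` and `Ã_t = Q_c*Q_c** + c` do not
depend on the choice of `c ≤ m(t)` nor on the representing map. -/
theorem statement18 [NormedAddCommGroup H] [InnerProductSpace ℂ H] [CompleteSpace H]
    [NormedAddCommGroup K] [InnerProductSpace ℂ K] [CompleteSpace K]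
    [NormedAddCommGroup K'] [InnerProductSpace ℂ K'] [CompleteSpace K']
    {D : Submodule ℂ H} (t : Form D) (m c c' : ℝ)
    (hm : IsGLB (rayleighSet t) m) (hc : c ≤ m) (hc' : c' ≤ m)
    (Q : ↥D →ₗ[ℂ] K) (Q' : ↥D →ₗ[ℂ] K')
    (hQ : IsRepMap t c Q) (hQ' : IsRepMap t c' Q') :
    StRel Q c = StRel Q' c' ∧ ARel Q c = ARel Q' c' := by
  exact ⟨Set.Subset.antisymm (aux_st_subset t c c' hQ hQ') (aux_st_subset t c' c hQ' hQ),
    Set.Subset.antisymm (aux_a_subset t c c' hQ hQ') (aux_a_subset t c' c hQ' hQ)⟩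
end
end

section
/- Let t_n be a sequence of semibounded forms on H with t_m ≤ t_n for m ≤ n (i.e., dom t_n ⊂ dom t_m and t_m[φ] ≤ t_n[φ] on dom t_n). Then there exists a semibounded form t with dom t = {φ ∈ ∩_n dom t_n : sup_n t_n[φ] < ∞} such that t_n ≤ t for all n and t_n[φ] ↗ t[φ] for every φ ∈ dom t. Moreover, if u is a semibounded form with t_n ≤ u for all n, then t ≤ u; if every t_n is closable then t is closable; if every t_n is closed then t is closed. -/
open Filter Topology
open scoped ComplexOrder

noncomputable section

variable {H K K' : Type*}

section Aux
variable {E : Type*} [AddCommGroup E] [Module ℂ E]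
variable (B : E → E → ℂ)

lemma aux_herm
    (haddl : ∀ x y z, B (x + y) z = B x z + B y z)
    (haddr : ∀ x y z, B x (y + z) = B x y + B x z)
    (hsmull : ∀ (c : ℂ) x y, B (c • x) y = c * B x y)
    (hsmulr : ∀ (c : ℂ) x y, B x (c • y) = (starRingEnd ℂ) c * B x y)
    (hre : ∀ x, (B x x).im = 0) (x y : E) :
    B y x = (starRingEnd ℂ) (B x y) := by
  have h1 : (B x y).im + (B y x).im = 0 := by
    have h := hre (x + y)
    rw [haddl, haddr, haddr] at h
    simpa [hre x, hre y] using h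
  have h2 : -(B x y).re + (B y x).re = 0 := by
    have h := hre (x + Complex.I • y)
    rw [haddl, haddr, haddr, hsmull, hsmulr, hsmulr, hsmull] at h
    simp only [Complex.add_im, Complex.mul_im, Complex.mul_re] at h
    simp [Complex.add_im, Complex.mul_im, hre x, hre y] at h
    linarith [hre x, hre y]
  apply Complex.ext
  · simpa using by linarith
  · simpa using by linarith

lemma aux_cs
    (haddl : ∀ x y z, B (x + y) z = B x z + B y z)
    (haddr : ∀ x y z, B x (y + z) = B x y + B x z)
    (hsmull : ∀ (c : ℂ) x y, B (c • x) y = c * B x y)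
    (hsmulr : ∀ (c : ℂ) x y, B x (c • y) = (starRingEnd ℂ) c * B x y)
    (hre : ∀ x, (B x x).im = 0) (hnn : ∀ x, 0 ≤ (B x x).re) (x y : E) :
    ‖B x y‖ ^ 2 ≤ (B x x).re * (B y y).re := by
  letI c : PreInnerProductSpace.Core ℂ E :=
    { inner := fun a b => B b a
      conj_inner_symm := fun a b => (aux_herm B haddl haddr hsmull hsmulr hre a b).symm
      re_inner_nonneg := fun a => hnn a
      add_left := fun a b z => haddr z a b
      smul_left := fun a b r => hsmulr r b a }
  letI : Inner ℂ E := c.toInner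
  have h := InnerProductSpace.Core.inner_mul_inner_self_le (𝕜 := ℂ) (F := E) x y
  have h1 : (inner ℂ x y : ℂ) = B y x := rfl
  have h2 : (inner ℂ y x : ℂ) = B x y := rfl
  have h3 : (inner ℂ x x : ℂ) = B x x := rfl
  have h4 : (inner ℂ y y : ℂ) = B y y := rfl
  rw [h1, h2, h3, h4] at h
  have hsym : ‖B y x‖ = ‖B x y‖ := by
    rw [aux_herm B haddl haddr hsmull hsmulr hre x y]
    exact RCLike.norm_conj _
  rw [hsym] at h
  calc ‖B x y‖ ^ 2 = ‖B x y‖ * ‖B x y‖ := sq (‖B x y‖) ▸ by ring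
    _ ≤ _ := h

end Aux

section Aux2
variable {E : Type*} [AddCommGroup E] [Module ℂ E]
variable (B : E → E → ℂ)

lemma aux_tri
    (haddl : ∀ x y z, B (x + y) z = B x z + B y z)
    (haddr : ∀ x y z, B x (y + z) = B x y + B x z)
    (hsmull : ∀ (c : ℂ) x y, B (c • x) y = c * B x y)
    (hsmulr : ∀ (c : ℂ) x y, B x (c • y) = (starRingEnd ℂ) c * B x y)
    (hre : ∀ x, (B x x).im = 0) (hnn : ∀ x, 0 ≤ (B x x).re) (x y : E) :
    Real.sqrt ((B (x + y) (x + y)).re) ≤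
      Real.sqrt ((B x x).re) + Real.sqrt ((B y y).re) := by
  have hcs := aux_cs B haddl haddr hsmull hsmulr hre hnn x y
  have hnorm : ‖B x y‖ ≤ Real.sqrt ((B x x).re) * Real.sqrt ((B y y).re) := by
    rw [← Real.sqrt_mul_self (norm_nonneg (B x y)), ← Real.sqrt_mul (hnn x)]
    apply Real.sqrt_le_sqrt
    calc ‖B x y‖ * ‖B x y‖ = ‖B x y‖ ^ 2 := (sq _).symm
      _ ≤ _ := hcs
  have hexp : (B (x + y) (x + y)).re
      = (B x x).re + 2 * (B x y).re + (B y y).re := by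
    rw [haddl, haddr, haddr]
    have hyx : B y x = (starRingEnd ℂ) (B x y) :=
      aux_herm B haddl haddr hsmull hsmulr hre x y
    rw [hyx]
    simp [Complex.add_re, Complex.conj_re]
    ring
  have hle : (B (x + y) (x + y)).re
      ≤ (Real.sqrt ((B x x).re) + Real.sqrt ((B y y).re)) ^ 2 := by
    rw [hexp, add_sq, Real.sq_sqrt (hnn x), Real.sq_sqrt (hnn y)]
    have : (B x y).re ≤ ‖B x y‖ := Complex.re_le_norm _
    nlinarith [hnorm, this]
  calc Real.sqrt ((B (x + y) (x + y)).re) ≤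
      Real.sqrt ((Real.sqrt ((B x x).re) + Real.sqrt ((B y y).re)) ^ 2) :=
        Real.sqrt_le_sqrt hle
    _ = _ := Real.sqrt_sq (by positivity)

lemma aux_eps (a : ℕ → ℕ → ℝ) (S : ℕ → ℕ → ℝ)
    (ha0 : ∀ n k, 0 ≤ a n k)
    (htri : ∀ n k j, Real.sqrt (a n k) ≤ Real.sqrt (S k j) + Real.sqrt (a n j))
    (hS : ∀ ε > (0:ℝ), ∃ K, ∀ k ≥ K, ∀ j ≥ K, S k j ≤ ε)
    (hk : ∀ n, Tendsto (fun k => a n k) atTop (nhds 0)) :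
    ∀ ε > (0:ℝ), ∃ K, ∀ n, ∀ k ≥ K, a n k ≤ ε := by
  intro ε hε
  obtain ⟨K, hK⟩ := hS ε hε
  refine ⟨K, fun n k hkK => ?_⟩
  have hsq : Real.sqrt (a n k) ≤ Real.sqrt ε := by
    have htd : Tendsto (fun j => Real.sqrt ε + Real.sqrt (a n j)) atTop
        (nhds (Real.sqrt ε + 0)) :=
      tendsto_const_nhds.add
        ((Real.continuous_sqrt.tendsto' 0 0 Real.sqrt_zero).comp (hk n))
    rw [add_zero] at htd
    refine ge_of_tendsto htd ?_
    filter_upwards [eventually_ge_atTop K] with j hj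
    calc Real.sqrt (a n k) ≤ Real.sqrt (S k j) + Real.sqrt (a n j) := htri n k j
      _ ≤ Real.sqrt ε + Real.sqrt (a n j) := by
        gcongr
        exact hK k hkK j hj
  calc a n k = Real.sqrt (a n k) * Real.sqrt (a n k) :=
        (Real.mul_self_sqrt (ha0 n k)).symm
    _ ≤ Real.sqrt ε * Real.sqrt ε := by
        apply mul_le_mul hsq hsq (Real.sqrt_nonneg _) (Real.sqrt_nonneg _)
    _ = ε := Real.mul_self_sqrt hε.le
end Aux2

section Helpers
variable [NormedAddCommGroup H] [InnerProductSpace ℂ H]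

lemma form_smul_diag {D : Submodule ℂ H} (t : Form D) (c : ℂ) (a : ↥D) :
    t (c • a) (c • a) = (Complex.normSq c : ℂ) * t a a := by
  have h1 : t (c • a) = c • t a := map_smul t c a
  have h2 : (t a) (c • a) = (starRingEnd ℂ) c • (t a) a := LinearMap.map_smulₛₗ (t a) c a
  rw [h1, LinearMap.smul_apply, h2]
  simp only [smul_eq_mul]
  rw [← mul_assoc, Complex.mul_conj]

lemma form_par {D : Submodule ℂ H} (t : Form D) (a b : ↥D) :
    t (a + b) (a + b) + t (a - b) (a - b) = 2 * t a a + 2 * t b b := by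
  simp only [map_add, map_sub, LinearMap.add_apply, LinearMap.sub_apply]
  ring

/-- Cauchy-Schwarz for the difference of two forms. -/
lemma diff_cs {D D' : Submodule ℂ H} (t : Form D) (s : Form D') (hle : D ≤ D')
    (him : ∀ a : ↥D, (t a a - s (Submodule.inclusion hle a) (Submodule.inclusion hle a)).im = 0)
    (hnn : ∀ a : ↥D, 0 ≤ (t a a - s (Submodule.inclusion hle a) (Submodule.inclusion hle a)).re)
    (a b : ↥D) :
    ‖t a b - s (Submodule.inclusion hle a) (Submodule.inclusion hle b)‖ ^ 2 ≤
      (t a a - s (Submodule.inclusion hle a) (Submodule.inclusion hle a)).re *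
      (t b b - s (Submodule.inclusion hle b) (Submodule.inclusion hle b)).re := by
  set ι := Submodule.inclusion (R := ℂ) hle with hι
  exact aux_cs (fun x y => t x y - s (ι x) (ι y))
    (by intro x y z; simp only [map_add, LinearMap.add_apply]; ring)
    (by intro x y z; simp only [map_add, LinearMap.add_apply]; ring)
    (by intro c x y; simp only [map_smul, LinearMap.smul_apply, smul_eq_mul]; ring)
    (by intro c x y; simp only [map_smul, LinearMap.map_smulₛₗ, LinearMap.smul_apply,
          smul_eq_mul]; ring)
    him hnn a b

/-- Triangle inequality for the seminorm induced by `t - c₀`. -/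
lemma shifted_tri {D : Submodule ℂ H} (t : Form D) (c0 : ℝ)
    (him : ∀ φ : ↥D, (t φ φ).im = 0)
    (hge : ∀ φ : ↥D, c0 * ‖(φ : H)‖ ^ 2 ≤ (t φ φ).re) (x y : ↥D) :
    Real.sqrt ((t (x + y) (x + y)).re - c0 * ‖((x + y : ↥D) : H)‖ ^ 2) ≤
      Real.sqrt ((t x x).re - c0 * ‖(x : H)‖ ^ 2) +
      Real.sqrt ((t y y).re - c0 * ‖(y : H)‖ ^ 2) := by
  have key := aux_tri (fun a b : ↥D => t a b - (c0 : ℂ) * (inner ℂ (b : H) (a : H) : ℂ))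
    (by intro a b z; simp only [map_add, LinearMap.add_apply, Submodule.coe_add,
          inner_add_right]; ring)
    (by intro a b z; simp only [map_add, Submodule.coe_add, inner_add_left]; ring)
    (by intro c a b; simp only [map_smul, LinearMap.smul_apply, Submodule.coe_smul,
          inner_smul_right, smul_eq_mul]; ring)
    (by intro c a b; simp only [LinearMap.map_smulₛₗ, Submodule.coe_smul, inner_smul_left,
          smul_eq_mul]; ring)
    (by intro a
        simp [inner_self_eq_norm_sq_to_K, him a, ← Complex.ofReal_pow])
    (by intro a
        have := hge a
        simp [inner_self_eq_norm_sq_to_K, ← Complex.ofReal_pow]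
        linarith)
    x y
  have hinner : ∀ a : ↥D, ((t a a - (c0 : ℂ) * (inner ℂ (a : H) (a : H) : ℂ))).re
      = (t a a).re - c0 * ‖(a : H)‖ ^ 2 := by
    intro a
    simp [inner_self_eq_norm_sq_to_K, ← Complex.ofReal_pow]
  rw [hinner, hinner, hinner] at key
  exact key

/-- Complex convergence to `0` from real parts, when imaginary parts vanish. -/
lemma aux_tendsto_c {α : Type*} {l : Filter α} (f : α → ℂ)
    (him : ∀ x, (f x).im = 0) (hre : Tendsto (fun x => (f x).re) l (nhds 0)) :
    Tendsto f l (nhds 0) := by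
  have hf : f = fun x => ((f x).re : ℂ) := funext fun x => by
    apply Complex.ext <;> simp [him x]
  rw [hf]
  have := (Complex.continuous_ofReal.tendsto 0).comp hre
  simpa [Function.comp_def] using this

end Helpers

section LimDom
variable [NormedAddCommGroup H] [InnerProductSpace ℂ H]

/-- The limit domain of a nondecreasing sequence of semibounded forms. -/
def limDom (Dn : ℕ → Submodule ℂ H) (tn : ∀ n, Form (Dn n)) (c0 : ℝ)
    (hge : ∀ n (φ : ↥(Dn n)), c0 * ‖(φ : H)‖ ^ 2 ≤ (tn n φ φ).re) : Submodule ℂ H where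
  carrier := {x | ∃ hx : ∀ n, x ∈ Dn n,
    BddAbove (Set.range fun n => (tn n ⟨x, hx n⟩ ⟨x, hx n⟩).re)}
  zero_mem' := by
    refine ⟨fun n => zero_mem _, 0, ?_⟩
    rintro r ⟨n, rfl⟩
    have h0 : (⟨(0 : H), zero_mem _⟩ : ↥(Dn n)) = 0 := rfl
    simp [h0]
  add_mem' := by
    rintro x y ⟨hx, bx, hbx⟩ ⟨hy, by', hby⟩
    refine ⟨fun n => add_mem (hx n) (hy n),
      2 * bx + 2 * by' + |c0| * (‖x‖ + ‖y‖) ^ 2, ?_⟩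
    rintro r ⟨n, rfl⟩
    set a : ↥(Dn n) := ⟨x, hx n⟩ with ha
    set b : ↥(Dn n) := ⟨y, hy n⟩ with hb
    have hpar : (tn n (a + b) (a + b)).re + (tn n (a - b) (a - b)).re
        = 2 * (tn n a a).re + 2 * (tn n b b).re := by
      have := congrArg Complex.re (form_par (tn n) a b)
      simpa using this
    have hsub : c0 * ‖x - y‖ ^ 2 ≤ (tn n (a - b) (a - b)).re := by
      have := hge n (a - b)
      simpa using this
    have hxa : (tn n a a).re ≤ bx := hbx ⟨n, rfl⟩
    have hyb : (tn n b b).re ≤ by' := hby ⟨n, rfl⟩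
    have hn1 : ‖x - y‖ ≤ ‖x‖ + ‖y‖ := norm_sub_le x y
    have hn2 : ‖x - y‖ ^ 2 ≤ (‖x‖ + ‖y‖) ^ 2 :=
      pow_le_pow_left₀ (norm_nonneg _) hn1 2
    have h3 : |c0| * ‖x - y‖ ^ 2 ≤ |c0| * (‖x‖ + ‖y‖) ^ 2 :=
      mul_le_mul_of_nonneg_left hn2 (abs_nonneg c0)
    have h4 : -|c0| * ‖x - y‖ ^ 2 ≤ c0 * ‖x - y‖ ^ 2 :=
      mul_le_mul_of_nonneg_right (neg_abs_le c0) (sq_nonneg _)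
    show (tn n (a + b) (a + b)).re ≤ _
    nlinarith [hpar, hsub, hxa, hyb, h3, h4]
  smul_mem' := by
    rintro c x ⟨hx, bx, hbx⟩
    refine ⟨fun n => Submodule.smul_mem _ c (hx n), Complex.normSq c * bx, ?_⟩
    rintro r ⟨n, rfl⟩
    set a : ↥(Dn n) := ⟨x, hx n⟩ with ha
    show ((tn n (c • a)) (c • a)).re ≤ _
    rw [form_smul_diag, Complex.re_ofReal_mul]
    exact mul_le_mul_of_nonneg_left (hbx ⟨n, rfl⟩) (Complex.normSq_nonneg c)

lemma mem_limDom {Dn : ℕ → Submodule ℂ H} {tn : ∀ n, Form (Dn n)} {c0 : ℝ}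
    {hge : ∀ n (φ : ↥(Dn n)), c0 * ‖(φ : H)‖ ^ 2 ≤ (tn n φ φ).re} {x : H} :
    x ∈ limDom Dn tn c0 hge ↔ ∃ hx : ∀ n, x ∈ Dn n,
      BddAbove (Set.range fun n => (tn n ⟨x, hx n⟩ ⟨x, hx n⟩).re) := Iff.rfl

end LimDom
set_option maxHeartbeats 8000000 in
/-- a nondecreasing sequence of semibounded forms has a limit form `t`
with the stated domain, which is the least upper bound, monotone limit of the `t_n`,
and inherits closability/closedness. -/
theorem statement19 [NormedAddCommGroup H] [InnerProductSpace ℂ H] [CompleteSpace H]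
    (Dn : ℕ → Submodule ℂ H) (tn : ∀ n, Form (Dn n))
    (hsb : ∀ n, ∃ c, BddBelowBy (tn n) c)
    (hmono : ∀ m n, m ≤ n → FormLE (tn m) (tn n)) :
    ∃ (Dl : Submodule ℂ H) (t : Form Dl),
      (∃ c, BddBelowBy t c) ∧
      (∀ x : H, x ∈ Dl ↔ ∃ hx : ∀ n, x ∈ Dn n,
        BddAbove (Set.range fun n => (tn n ⟨x, hx n⟩ ⟨x, hx n⟩).re)) ∧
      (∀ n, FormLE (tn n) t) ∧
      (∀ (φ : ↥Dl) (hmem : ∀ n, (φ : H) ∈ Dn n),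
        Monotone (fun n => (tn n ⟨(φ : H), hmem n⟩ ⟨(φ : H), hmem n⟩).re) ∧
        Tendsto (fun n => tn n ⟨(φ : H), hmem n⟩ ⟨(φ : H), hmem n⟩) atTop
          (nhds (t φ φ))) ∧
      (∀ (Du : Submodule ℂ H) (u : Form Du), (∀ n, FormLE (tn n) u) → FormLE t u) ∧
      ((∀ n, FormClosable (tn n)) → FormClosable t) ∧
      ((∀ n, FormClosed (tn n)) → FormClosed t) := by

  classical
  obtain ⟨c0, hc0⟩ := hsb 0
  -- imaginary parts of diagonal values vanish
  have him : ∀ n (φ : ↥(Dn n)), (tn n φ φ).im = 0 := by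
    intro n φ
    obtain ⟨c, hc⟩ := hsb n
    have h := (Complex.le_def.mp (hc φ)).2
    rw [← h]
    exact Complex.ofReal_im _
  -- uniform lower bound c0
  have hge : ∀ n (φ : ↥(Dn n)), c0 * ‖(φ : H)‖ ^ 2 ≤ (tn n φ φ).re := by
    intro n φ
    obtain ⟨hle, hineq⟩ := hmono 0 n (Nat.zero_le n)
    have h1 := (Complex.le_def.mp (hc0 ⟨(φ : H), hle φ.2⟩)).1
    have h2 := (Complex.le_def.mp (hineq φ)).1
    simp only [Complex.ofReal_re] at h1
    exact le_trans h1 h2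
  -- monotonicity of diagonal values
  have hmre : ∀ m n, m ≤ n → ∀ (φ : ↥(Dn n)) (hm : (φ : H) ∈ Dn m),
      (tn m ⟨(φ : H), hm⟩ ⟨(φ : H), hm⟩).re ≤ (tn n φ φ).re := by
    intro m n hmn φ hm
    obtain ⟨hle, hineq⟩ := hmono m n hmn
    exact (Complex.le_def.mp (hineq φ)).1
  set Dl : Submodule ℂ H := limDom Dn tn c0 hge with hDl
  have hld : ∀ n, Dl ≤ Dn n := fun n x hx => (mem_limDom.mp hx).choose n
  set ι : ∀ n, ↥Dl →ₗ[ℂ] ↥(Dn n) := fun n => Submodule.inclusion (hld n) with hι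
  -- the diagonal sequences
  have hdgmono : ∀ φ : ↥Dl, Monotone (fun n => (tn n (ι n φ) (ι n φ)).re) := by
    intro φ m n hmn
    exact hmre m n hmn (ι n φ) (hld m φ.2)
  have hdgbdd : ∀ φ : ↥Dl, BddAbove (Set.range fun n => (tn n (ι n φ) (ι n φ)).re) :=
    fun φ => (mem_limDom.mp φ.2).choose_spec
  have hdgtend : ∀ φ : ↥Dl, Tendsto (fun n => (tn n (ι n φ) (ι n φ)).re) atTop
      (nhds (⨆ n, (tn n (ι n φ) (ι n φ)).re)) :=
    fun φ => tendsto_atTop_ciSup (hdgmono φ) (hdgbdd φ)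
  -- Cauchy-Schwarz for differences
  have hkey : ∀ m n, m ≤ n → ∀ φ ψ : ↥Dl,
      ‖tn n (ι n φ) (ι n ψ) - tn m (ι m φ) (ι m ψ)‖ ^ 2 ≤
        ((tn n (ι n φ) (ι n φ)).re - (tn m (ι m φ) (ι m φ)).re) *
        ((tn n (ι n ψ) (ι n ψ)).re - (tn m (ι m ψ) (ι m ψ)).re) := by
    intro m n hmn φ ψ
    obtain ⟨hle, -⟩ := hmono m n hmn
    have h := diff_cs (tn n) (tn m) hle
      (fun a => by simp [Complex.sub_im, him])
      (fun a => by
        have h2 : (tn m) (Submodule.inclusion hle a) (Submodule.inclusion hle a)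
            = (tn m) ⟨(a : H), hle a.2⟩ ⟨(a : H), hle a.2⟩ := rfl
        rw [Complex.sub_re, h2, sub_nonneg]
        exact hmre m n hmn a (hle a.2))
      (ι n φ) (ι n ψ)
    exact h
  -- the sequence of form values is Cauchy
  have hFc : ∀ φ ψ : ↥Dl, CauchySeq (fun n => tn n (ι n φ) (ι n ψ)) := by
    intro φ ψ
    rw [Metric.cauchySeq_iff]
    intro ε hε
    have hcφ := (hdgtend φ).cauchySeq
    have hcψ := (hdgtend ψ).cauchySeq
    rw [Metric.cauchySeq_iff] at hcφ hcψ
    obtain ⟨N1, hN1⟩ := hcφ (ε / 2) (by positivity)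
    obtain ⟨N2, hN2⟩ := hcψ (ε / 2) (by positivity)
    refine ⟨max N1 N2, ?_⟩
    have key : ∀ m n, m ≤ n → max N1 N2 ≤ m → max N1 N2 ≤ n →
        dist (tn n (ι n φ) (ι n ψ)) (tn m (ι m φ) (ι m ψ)) < ε := by
      intro m n hmn hm hn
      have h1 := hN1 n (le_trans (le_max_left _ _) hn) m (le_trans (le_max_left _ _) hm)
      have h2 := hN2 n (le_trans (le_max_right _ _) hn) m (le_trans (le_max_right _ _) hm)
      rw [Real.dist_eq] at h1 h2
      have hd1 : 0 ≤ (tn n (ι n φ) (ι n φ)).re - (tn m (ι m φ) (ι m φ)).re :=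
        sub_nonneg.mpr (hdgmono φ hmn)
      have hd2 : 0 ≤ (tn n (ι n ψ) (ι n ψ)).re - (tn m (ι m ψ) (ι m ψ)).re :=
        sub_nonneg.mpr (hdgmono ψ hmn)
      have h1' : (tn n (ι n φ) (ι n φ)).re - (tn m (ι m φ) (ι m φ)).re ≤ ε / 2 :=
        le_of_lt (lt_of_le_of_lt (le_abs_self _) h1)
      have h2' : (tn n (ι n ψ) (ι n ψ)).re - (tn m (ι m ψ) (ι m ψ)).re ≤ ε / 2 :=
        le_of_lt (lt_of_le_of_lt (le_abs_self _) h2)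
      have hk := hkey m n hmn φ ψ
      rw [dist_eq_norm]
      have hsq : ‖tn n (ι n φ) (ι n ψ) - tn m (ι m φ) (ι m ψ)‖ ^ 2 ≤ (ε / 2) ^ 2 := by
        calc ‖tn n (ι n φ) (ι n ψ) - tn m (ι m φ) (ι m ψ)‖ ^ 2 ≤ _ := hk
          _ ≤ (ε / 2) * (ε / 2) := mul_le_mul h1' h2' hd2 (by positivity)
          _ = (ε / 2) ^ 2 := (sq _).symm
      nlinarith [hsq, hε, norm_nonneg (tn n (ι n φ) (ι n ψ) - tn m (ι m φ) (ι m ψ))]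
    intro m hm n hn
    rcases le_total n m with h | h
    · exact key n m h hn hm
    · rw [dist_comm]; exact key m n h hm hn
  -- the limit sesquilinear form
  set tf : ↥Dl → ↥Dl → ℂ := fun φ ψ => limUnder atTop (fun n => tn n (ι n φ) (ι n ψ)) with htf
  have htend : ∀ φ ψ : ↥Dl, Tendsto (fun n => tn n (ι n φ) (ι n ψ)) atTop (nhds (tf φ ψ)) :=
    fun φ ψ => (hFc φ ψ).tendsto_limUnder
  have h1 : ∀ φ φ' ψ : ↥Dl, tf (φ + φ') ψ = tf φ ψ + tf φ' ψ := by
    intro φ φ' ψ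
    refine tendsto_nhds_unique (htend (φ + φ') ψ)
      (((htend φ ψ).add (htend φ' ψ)).congr fun n => ?_)
    rw [map_add (ι n), map_add, LinearMap.add_apply]
  have h2 : ∀ (c : ℂ) (φ ψ : ↥Dl), tf (c • φ) ψ = c * tf φ ψ := by
    intro c φ ψ
    refine tendsto_nhds_unique (htend (c • φ) ψ)
      (((htend φ ψ).const_mul c).congr fun n => ?_)
    rw [map_smul (ι n), map_smul, LinearMap.smul_apply, smul_eq_mul]
  have h3 : ∀ φ ψ ψ' : ↥Dl, tf φ (ψ + ψ') = tf φ ψ + tf φ ψ' := by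
    intro φ ψ ψ'
    refine tendsto_nhds_unique (htend φ (ψ + ψ'))
      (((htend φ ψ).add (htend φ ψ')).congr fun n => ?_)
    rw [map_add (ι n), map_add]
  have h4 : ∀ (c : ℂ) (φ ψ : ↥Dl), tf φ (c • ψ) = (starRingEnd ℂ) c * tf φ ψ := by
    intro c φ ψ
    refine tendsto_nhds_unique (htend φ (c • ψ))
      (((htend φ ψ).const_mul ((starRingEnd ℂ) c)).congr fun n => ?_)
    rw [map_smul (ι n), LinearMap.map_smulₛₗ, smul_eq_mul]
  -- diagonal facts for tf
  have htIm : ∀ φ : ↥Dl, (tf φ φ).im = 0 := by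
    intro φ
    refine tendsto_nhds_unique ((Complex.continuous_im.tendsto _).comp (htend φ φ)) ?_
    have : (fun n => (tn n (ι n φ) (ι n φ)).im) = fun _ => (0 : ℝ) := by
      funext n; exact him n _
    rw [Function.comp_def, this]
    exact tendsto_const_nhds
  have htRe : ∀ φ : ↥Dl, Tendsto (fun n => (tn n (ι n φ) (ι n φ)).re) atTop
      (nhds ((tf φ φ).re)) :=
    fun φ => (Complex.continuous_re.tendsto _).comp (htend φ φ)
  have htle : ∀ (φ : ↥Dl) n, (tn n (ι n φ) (ι n φ)).re ≤ (tf φ φ).re :=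
    fun φ n => Monotone.ge_of_tendsto (hdgmono φ) (htRe φ) n
  have htge : ∀ φ : ↥Dl, c0 * ‖(φ : H)‖ ^ 2 ≤ (tf φ φ).re := by
    intro φ
    have h := hge 0 (ι 0 φ)
    have hcoe : ((ι 0 φ : ↥(Dn 0)) : H) = (φ : H) := rfl
    rw [hcoe] at h
    exact h.trans (htle φ 0)
  -- shifted seminorm facts
  have hSn0 : ∀ n (a : ↥(Dn n)), 0 ≤ (tn n a a).re - c0 * ‖(a : H)‖ ^ 2 :=
    fun n a => sub_nonneg.mpr (hge n a)
  have hSl0 : ∀ ψ : ↥Dl, 0 ≤ (tf ψ ψ).re - c0 * ‖(ψ : H)‖ ^ 2 :=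
    fun ψ => sub_nonneg.mpr (htge ψ)
  have hSnle : ∀ n (ψ : ↥Dl), (tn n (ι n ψ) (ι n ψ)).re - c0 * ‖(ψ : H)‖ ^ 2
      ≤ (tf ψ ψ).re - c0 * ‖(ψ : H)‖ ^ 2 := by
    intro n ψ
    have := htle ψ n
    linarith
  have hSntri : ∀ n (a b : ↥(Dn n)),
      Real.sqrt ((tn n (a + b) (a + b)).re - c0 * ‖((a + b : ↥(Dn n)) : H)‖ ^ 2)
        ≤ Real.sqrt ((tn n a a).re - c0 * ‖(a : H)‖ ^ 2)
          + Real.sqrt ((tn n b b).re - c0 * ‖(b : H)‖ ^ 2) :=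
    fun n a b => shifted_tri (tn n) c0 (him n) (hge n) a b
  have hSlim : ∀ ψ : ↥Dl, Tendsto (fun n => (tn n (ι n ψ) (ι n ψ)).re - c0 * ‖(ψ : H)‖ ^ 2)
      atTop (nhds ((tf ψ ψ).re - c0 * ‖(ψ : H)‖ ^ 2)) :=
    fun ψ => (htRe ψ).sub tendsto_const_nhds
  have hSneg : ∀ n (v : ↥(Dn n)), tn n (-v) (-v) = tn n v v := by
    intro n v
    simp [map_neg, LinearMap.neg_apply]
  refine ⟨Dl, LinearMap.mk₂'ₛₗ (RingHom.id ℂ) (starRingEnd ℂ) tf h1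
      (fun c φ ψ => by simpa using h2 c φ ψ) h3
      (fun c φ ψ => by simpa using h4 c φ ψ), ?_, ?_, ?_, ?_, ?_, ?_, ?_⟩
  · -- semibounded
    refine ⟨c0, fun φ => ?_⟩
    rw [LinearMap.mk₂'ₛₗ_apply]
    exact Complex.le_def.mpr ⟨by rw [Complex.ofReal_re]; exact htge φ,
      by rw [Complex.ofReal_im, htIm φ]⟩
  · -- domain description
    exact fun x => mem_limDom
  · -- tn n ≤ t
    intro n
    refine ⟨hld n, fun φ => ?_⟩
    rw [LinearMap.mk₂'ₛₗ_apply]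
    exact Complex.le_def.mpr ⟨htle φ n, by rw [htIm φ]; exact him n _⟩
  · -- monotone convergence
    intro φ hmem
    constructor
    · exact fun m n hmn => hmre m n hmn ⟨(φ : H), hmem n⟩ (hmem m)
    · exact htend φ φ
  · -- least upper bound
    intro Du u hu
    have hDuDl : Du ≤ Dl := by
      intro x hx
      refine mem_limDom.mpr ⟨fun n => ((hu n).choose) hx, (u ⟨x, hx⟩ ⟨x, hx⟩).re, ?_⟩
      rintro r ⟨n, rfl⟩
      exact (Complex.le_def.mp ((hu n).choose_spec ⟨x, hx⟩)).1
    refine ⟨hDuDl, fun φ => ?_⟩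
    rw [LinearMap.mk₂'ₛₗ_apply]
    refine Complex.le_def.mpr ⟨?_, ?_⟩
    · apply le_of_tendsto (htRe ⟨(φ : H), hDuDl φ.2⟩)
      filter_upwards with n
      exact (Complex.le_def.mp ((hu n).choose_spec φ)).1
    · rw [htIm ⟨(φ : H), hDuDl φ.2⟩]
      have h := (Complex.le_def.mp ((hu 0).choose_spec φ)).2
      rw [← h]
      exact (him 0 _).symm
  · -- closable
    intro hcl φ hTC
    simp only [LinearMap.mk₂'ₛₗ_apply] at hTC ⊢
    obtain ⟨hconv, hcauchy⟩ := hTC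
    unfold TConv at *
    have hpairnorm : Tendsto (fun p : ℕ × ℕ => ‖((φ p.1 - φ p.2 : ↥Dl) : H)‖)
        (atTop ×ˢ atTop) (nhds 0) := by
      have h := ((hconv.comp (tendsto_fst (f := (atTop : Filter ℕ)) (g := atTop))).sub
        (hconv.comp tendsto_snd)).norm
      simpa using h
    have hnormsq : Tendsto (fun p : ℕ × ℕ => c0 * ‖((φ p.1 - φ p.2 : ↥Dl) : H)‖ ^ 2)
        (atTop ×ˢ atTop) (nhds 0) := by
      have h := ((hpairnorm.pow 2)).const_mul c0
      simpa using h
    have hcre : Tendsto (fun p : ℕ × ℕ => (tf (φ p.1 - φ p.2) (φ p.1 - φ p.2)).re)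
        (atTop ×ˢ atTop) (nhds 0) := by
      have h := (Complex.continuous_re.tendsto _).comp hcauchy
      simp only [Function.comp_def, Complex.zero_re] at h
      exact h
    have hSpair : Tendsto (fun p : ℕ × ℕ => (tf (φ p.1 - φ p.2) (φ p.1 - φ p.2)).re
        - c0 * ‖((φ p.1 - φ p.2 : ↥Dl) : H)‖ ^ 2) (atTop ×ˢ atTop) (nhds 0) := by
      have h := hcre.sub hnormsq
      simpa using h
    have hSK : ∀ ε > (0:ℝ), ∃ K, ∀ k ≥ K, ∀ j ≥ K,
        (tf (φ k - φ j) (φ k - φ j)).re - c0 * ‖((φ k - φ j : ↥Dl) : H)‖ ^ 2 ≤ ε := by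
      intro ε hε
      have hev : ∀ᶠ p : ℕ × ℕ in atTop ×ˢ atTop,
          (tf (φ p.1 - φ p.2) (φ p.1 - φ p.2)).re
            - c0 * ‖((φ p.1 - φ p.2 : ↥Dl) : H)‖ ^ 2 < ε :=
        hSpair.eventually_lt_const hε
      rw [Filter.eventually_prod_iff] at hev
      obtain ⟨pa, hpa, pb, hpb, hcomb⟩ := hev
      rw [Filter.eventually_atTop] at hpa hpb
      obtain ⟨K1, hK1⟩ := hpa
      obtain ⟨K2, hK2⟩ := hpb
      refine ⟨max K1 K2, fun k hk j hj => ?_⟩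
      exact le_of_lt (hcomb (hK1 k (le_trans (le_max_left _ _) hk))
        (hK2 j (le_trans (le_max_right _ _) hj)))
    have hTCn : ∀ n, TConv (tn n) (fun k => ι n (φ k)) 0 := by
      intro n
      refine ⟨hconv, ?_⟩
      apply aux_tendsto_c
      · intro p; exact him n _
      · have hsubι : ∀ p : ℕ × ℕ, ι n (φ p.1) - ι n (φ p.2) = ι n (φ p.1 - φ p.2) :=
          fun p => (map_sub (ι n) _ _).symm
        refine tendsto_of_tendsto_of_tendsto_of_le_of_le hnormsq hcre
          (fun p => ?_) (fun p => ?_)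
        · rw [hsubι p]; exact hge n (ι n (φ p.1 - φ p.2))
        · rw [hsubι p]; exact htle (φ p.1 - φ p.2) n
    have htn0 := fun n => hcl n (fun k => ι n (φ k)) (hTCn n)
    have hφnormsq : Tendsto (fun k => c0 * ‖((φ k : ↥Dl) : H)‖ ^ 2) atTop (nhds 0) := by
      have h := (hconv.norm.pow 2).const_mul c0
      simpa using h
    have hak : ∀ n, Tendsto (fun k => (tn n (ι n (φ k)) (ι n (φ k))).re
        - c0 * ‖((φ k : ↥Dl) : H)‖ ^ 2) atTop (nhds 0) := by
      intro n
      have h1 := (Complex.continuous_re.tendsto _).comp (htn0 n)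
      simp only [Function.comp_def, Complex.zero_re] at h1
      have h := h1.sub hφnormsq
      simpa using h
    have htri : ∀ n k j,
        Real.sqrt ((tn n (ι n (φ k)) (ι n (φ k))).re - c0 * ‖((φ k : ↥Dl) : H)‖ ^ 2)
          ≤ Real.sqrt ((tf (φ k - φ j) (φ k - φ j)).re
              - c0 * ‖((φ k - φ j : ↥Dl) : H)‖ ^ 2)
            + Real.sqrt ((tn n (ι n (φ j)) (ι n (φ j))).re
              - c0 * ‖((φ j : ↥Dl) : H)‖ ^ 2) := by
      intro n k j
      have heq : ι n (φ k - φ j) + ι n (φ j) = ι n (φ k) := by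
        rw [← map_add]
        congr 1
        exact sub_add_cancel _ _
      have h := hSntri n (ι n (φ k - φ j)) (ι n (φ j))
      rw [heq] at h
      exact h.trans (add_le_add (Real.sqrt_le_sqrt (hSnle n (φ k - φ j))) le_rfl)
    have hAE := aux_eps _ _ (fun n k => hSn0 n (ι n (φ k))) htri hSK hak
    have hSlφ : Tendsto (fun k => (tf (φ k) (φ k)).re - c0 * ‖((φ k : ↥Dl) : H)‖ ^ 2)
        atTop (nhds 0) := by
      rw [Metric.tendsto_atTop]
      intro ε hε
      obtain ⟨K, hK⟩ := hAE (ε / 2) (by positivity)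
      refine ⟨K, fun k hk => ?_⟩
      have hle2 : (tf (φ k) (φ k)).re - c0 * ‖((φ k : ↥Dl) : H)‖ ^ 2 ≤ ε / 2 :=
        le_of_tendsto (hSlim (φ k)) (Filter.Eventually.of_forall fun n => hK n k hk)
      rw [Real.dist_eq, sub_zero, abs_of_nonneg (hSl0 (φ k))]
      linarith
    apply aux_tendsto_c
    · intro k; exact htIm (φ k)
    · have h := hSlφ.add hφnormsq
      simpa using h
  · -- closed
    intro hcl φ x hTC
    simp only [LinearMap.mk₂'ₛₗ_apply] at hTC ⊢
    obtain ⟨hconv, hcauchy⟩ := hTC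
    have hpairnorm : Tendsto (fun p : ℕ × ℕ => ‖((φ p.1 - φ p.2 : ↥Dl) : H)‖)
        (atTop ×ˢ atTop) (nhds 0) := by
      have h := ((hconv.comp (tendsto_fst (f := (atTop : Filter ℕ)) (g := atTop))).sub
        (hconv.comp tendsto_snd)).norm
      simpa using h
    have hnormsq : Tendsto (fun p : ℕ × ℕ => c0 * ‖((φ p.1 - φ p.2 : ↥Dl) : H)‖ ^ 2)
        (atTop ×ˢ atTop) (nhds 0) := by
      have h := ((hpairnorm.pow 2)).const_mul c0
      simpa using h
    have hcre : Tendsto (fun p : ℕ × ℕ => (tf (φ p.1 - φ p.2) (φ p.1 - φ p.2)).re)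
        (atTop ×ˢ atTop) (nhds 0) := by
      have h := (Complex.continuous_re.tendsto _).comp hcauchy
      simp only [Function.comp_def, Complex.zero_re] at h
      exact h
    have hSpair : Tendsto (fun p : ℕ × ℕ => (tf (φ p.1 - φ p.2) (φ p.1 - φ p.2)).re
        - c0 * ‖((φ p.1 - φ p.2 : ↥Dl) : H)‖ ^ 2) (atTop ×ˢ atTop) (nhds 0) := by
      have h := hcre.sub hnormsq
      simpa using h
    have hSK : ∀ ε > (0:ℝ), ∃ K, ∀ k ≥ K, ∀ j ≥ K,
        (tf (φ k - φ j) (φ k - φ j)).re - c0 * ‖((φ k - φ j : ↥Dl) : H)‖ ^ 2 ≤ ε := by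
      intro ε hε
      have hev : ∀ᶠ p : ℕ × ℕ in atTop ×ˢ atTop,
          (tf (φ p.1 - φ p.2) (φ p.1 - φ p.2)).re
            - c0 * ‖((φ p.1 - φ p.2 : ↥Dl) : H)‖ ^ 2 < ε :=
        hSpair.eventually_lt_const hε
      rw [Filter.eventually_prod_iff] at hev
      obtain ⟨pa, hpa, pb, hpb, hcomb⟩ := hev
      rw [Filter.eventually_atTop] at hpa hpb
      obtain ⟨K1, hK1⟩ := hpa
      obtain ⟨K2, hK2⟩ := hpb
      refine ⟨max K1 K2, fun k hk j hj => ?_⟩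
      exact le_of_lt (hcomb (hK1 k (le_trans (le_max_left _ _) hk))
        (hK2 j (le_trans (le_max_right _ _) hj)))
    have hTCn : ∀ n, TConv (tn n) (fun k => ι n (φ k)) x := by
      intro n
      refine ⟨hconv, ?_⟩
      apply aux_tendsto_c
      · intro p; exact him n _
      · have hsubι : ∀ p : ℕ × ℕ, ι n (φ p.1) - ι n (φ p.2) = ι n (φ p.1 - φ p.2) :=
          fun p => (map_sub (ι n) _ _).symm
        refine tendsto_of_tendsto_of_tendsto_of_le_of_le hnormsq hcre
          (fun p => ?_) (fun p => ?_)
        · rw [hsubι p]; exact hge n (ι n (φ p.1 - φ p.2))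
        · rw [hsubι p]; exact htle (φ p.1 - φ p.2) n
    choose hxn htn0 using fun n => hcl n (fun k => ι n (φ k)) x (hTCn n)
    have hxnorm : Tendsto (fun k => ‖(φ k : H) - x‖) atTop (nhds 0) := by
      have h := (hconv.sub (tendsto_const_nhds (x := x))).norm
      simpa using h
    have hxnormsq : Tendsto (fun k => c0 * ‖(φ k : H) - x‖ ^ 2) atTop (nhds 0) := by
      have h := (hxnorm.pow 2).const_mul c0
      simpa using h
    have hak : ∀ n, Tendsto (fun k =>
        (tn n (ι n (φ k) - ⟨x, hxn n⟩) (ι n (φ k) - ⟨x, hxn n⟩)).re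
          - c0 * ‖(φ k : H) - x‖ ^ 2) atTop (nhds 0) := by
      intro n
      have h1 := (Complex.continuous_re.tendsto _).comp (htn0 n)
      simp only [Function.comp_def, Complex.zero_re] at h1
      have h := h1.sub hxnormsq
      simpa using h
    have htri : ∀ n k j,
        Real.sqrt ((tn n (ι n (φ k) - ⟨x, hxn n⟩) (ι n (φ k) - ⟨x, hxn n⟩)).re
            - c0 * ‖(φ k : H) - x‖ ^ 2)
          ≤ Real.sqrt ((tf (φ k - φ j) (φ k - φ j)).re
              - c0 * ‖((φ k - φ j : ↥Dl) : H)‖ ^ 2)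
            + Real.sqrt ((tn n (ι n (φ j) - ⟨x, hxn n⟩) (ι n (φ j) - ⟨x, hxn n⟩)).re
              - c0 * ‖(φ j : H) - x‖ ^ 2) := by
      intro n k j
      have heq : ι n (φ k - φ j) + (ι n (φ j) - ⟨x, hxn n⟩) = ι n (φ k) - ⟨x, hxn n⟩ := by
        rw [map_sub]
        exact sub_add_sub_cancel _ _ _
      have h := hSntri n (ι n (φ k - φ j)) (ι n (φ j) - ⟨x, hxn n⟩)
      rw [heq] at h
      exact h.trans (add_le_add (Real.sqrt_le_sqrt (hSnle n (φ k - φ j))) le_rfl)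
    have hAE := aux_eps
      (fun n k => (tn n (ι n (φ k) - ⟨x, hxn n⟩) (ι n (φ k) - ⟨x, hxn n⟩)).re
        - c0 * ‖(φ k : H) - x‖ ^ 2)
      (fun k j => (tf (φ k - φ j) (φ k - φ j)).re - c0 * ‖((φ k - φ j : ↥Dl) : H)‖ ^ 2)
      (fun n k => hSn0 n (ι n (φ k) - ⟨x, hxn n⟩)) htri hSK hak
    obtain ⟨K1, hK1⟩ := hAE 1 one_pos
    have hxDl : x ∈ Dl := by
      refine mem_limDom.mpr ⟨hxn,
        (Real.sqrt ((tf (φ K1) (φ K1)).re - c0 * ‖((φ K1 : ↥Dl) : H)‖ ^ 2) + 1) ^ 2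
          + c0 * ‖x‖ ^ 2, ?_⟩
      rintro r ⟨n, rfl⟩
      have heq2 : ι n (φ K1) + ((⟨x, hxn n⟩ : ↥(Dn n)) - ι n (φ K1))
          = (⟨x, hxn n⟩ : ↥(Dn n)) := by abel
      have h := hSntri n (ι n (φ K1)) ((⟨x, hxn n⟩ : ↥(Dn n)) - ι n (φ K1))
      rw [heq2] at h
      have hswap : tn n ((⟨x, hxn n⟩ : ↥(Dn n)) - ι n (φ K1))
            ((⟨x, hxn n⟩ : ↥(Dn n)) - ι n (φ K1))
          = tn n (ι n (φ K1) - ⟨x, hxn n⟩) (ι n (φ K1) - ⟨x, hxn n⟩) := by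
        rw [← neg_sub (ι n (φ K1)) ((⟨x, hxn n⟩ : ↥(Dn n))), hSneg]
      have hnormswap : ‖(((⟨x, hxn n⟩ : ↥(Dn n)) - ι n (φ K1) : ↥(Dn n)) : H)‖
          = ‖(φ K1 : H) - x‖ := by
        rw [show (((⟨x, hxn n⟩ : ↥(Dn n)) - ι n (φ K1) : ↥(Dn n)) : H)
          = x - (φ K1 : H) from rfl]
        exact norm_sub_rev _ _
      have h3 : Real.sqrt ((tn n ((⟨x, hxn n⟩ : ↥(Dn n)) - ι n (φ K1))
            ((⟨x, hxn n⟩ : ↥(Dn n)) - ι n (φ K1))).re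
          - c0 * ‖(((⟨x, hxn n⟩ : ↥(Dn n)) - ι n (φ K1) : ↥(Dn n)) : H)‖ ^ 2) ≤ 1 := by
        rw [hswap, hnormswap]
        calc Real.sqrt _ ≤ Real.sqrt 1 := Real.sqrt_le_sqrt (hK1 n K1 le_rfl)
          _ = 1 := Real.sqrt_one
      have h2 : Real.sqrt ((tn n (ι n (φ K1)) (ι n (φ K1))).re
            - c0 * ‖((ι n (φ K1) : ↥(Dn n)) : H)‖ ^ 2)
          ≤ Real.sqrt ((tf (φ K1) (φ K1)).re - c0 * ‖((φ K1 : ↥Dl) : H)‖ ^ 2) :=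
        Real.sqrt_le_sqrt (hSnle n (φ K1))
      have h4 : Real.sqrt ((tn n (⟨x, hxn n⟩ : ↥(Dn n)) ⟨x, hxn n⟩).re - c0 * ‖x‖ ^ 2) ≤
          Real.sqrt ((tf (φ K1) (φ K1)).re - c0 * ‖((φ K1 : ↥Dl) : H)‖ ^ 2) + 1 :=
        le_trans h (add_le_add h2 h3)
      have hnn : (0:ℝ) ≤ (tn n (⟨x, hxn n⟩ : ↥(Dn n)) ⟨x, hxn n⟩).re - c0 * ‖x‖ ^ 2 :=
        hSn0 n (⟨x, hxn n⟩ : ↥(Dn n))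
      have h5 : (tn n (⟨x, hxn n⟩ : ↥(Dn n)) ⟨x, hxn n⟩).re - c0 * ‖x‖ ^ 2
          ≤ (Real.sqrt ((tf (φ K1) (φ K1)).re - c0 * ‖((φ K1 : ↥Dl) : H)‖ ^ 2) + 1) ^ 2 := by
        calc (tn n (⟨x, hxn n⟩ : ↥(Dn n)) ⟨x, hxn n⟩).re - c0 * ‖x‖ ^ 2
            = Real.sqrt ((tn n (⟨x, hxn n⟩ : ↥(Dn n)) ⟨x, hxn n⟩).re - c0 * ‖x‖ ^ 2) ^ 2 :=
              (Real.sq_sqrt hnn).symm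
          _ ≤ _ := pow_le_pow_left₀ (Real.sqrt_nonneg _) h4 2
      linarith [h5]
    refine ⟨hxDl, ?_⟩
    have hSlφ : Tendsto (fun k => (tf (φ k - ⟨x, hxDl⟩) (φ k - ⟨x, hxDl⟩)).re
        - c0 * ‖(φ k : H) - x‖ ^ 2) atTop (nhds 0) := by
      rw [Metric.tendsto_atTop]
      intro ε hε
      obtain ⟨K, hK⟩ := hAE (ε / 2) (by positivity)
      refine ⟨K, fun k hk => ?_⟩
      have hcoe : ((φ k - (⟨x, hxDl⟩ : ↥Dl) : ↥Dl) : H) = (φ k : H) - x := rfl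
      have helem : ∀ n, ι n (φ k - (⟨x, hxDl⟩ : ↥Dl)) = ι n (φ k) - ⟨x, hxn n⟩ :=
        fun n => Subtype.ext rfl
      have hrw := hSlim (φ k - ⟨x, hxDl⟩)
      rw [hcoe] at hrw
      simp only [helem] at hrw
      have hle2 : (tf (φ k - ⟨x, hxDl⟩) (φ k - ⟨x, hxDl⟩)).re
          - c0 * ‖(φ k : H) - x‖ ^ 2 ≤ ε / 2 :=
        le_of_tendsto hrw (Filter.Eventually.of_forall fun n => hK n k hk)
      have h0 : (0:ℝ) ≤ (tf (φ k - ⟨x, hxDl⟩) (φ k - ⟨x, hxDl⟩)).re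
          - c0 * ‖(φ k : H) - x‖ ^ 2 := by
        have h0' := hSl0 (φ k - ⟨x, hxDl⟩)
        rwa [hcoe] at h0'
      rw [Real.dist_eq, sub_zero, abs_of_nonneg h0]
      linarith
    have hfinal : Tendsto (fun k => (tf (φ k - (⟨x, hxDl⟩ : ↥Dl)) (φ k - ⟨x, hxDl⟩)).re)
        atTop (nhds 0) := by
      have h := hSlφ.add hxnormsq
      simpa using h
    exact aux_tendsto_c _ (fun k => htIm _) hfinal
end
end
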